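/- Let K be a field, R = K[x,y]/(f) the coordinate ring of a C_{3,4} curve, and W^N ⊆ R the span of monomials x^i·y^j with 3i + 4j ≤ N and j ≤ 2. Let D, D' be typical degree-3 divisors and s ∈ W^9_{D+D'}, t ∈ W^10_{D+D'} \ W^9_{D+D'} forming an ideal generating set for D + D' (so ⟨s,t⟩ is the ideal of functions vanishing at D + D', and s·W^8 = W^17_{D+D'+D''} where div(s) = D + D' + D'' − 9P∞). Then W^7_{D''} = {ℓ ∈ W^7 : t·ℓ ∈ s·W^8}. -/

import Mathlib

noncomputable section

/-- Abstract data of a smooth projective (geometrically irreducible) curve over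
a field `K`, recording exactly what is needed to speak of divisors,
Riemann–Roch spaces and the genus: a set of closed points `Pt` with their
degrees, a function field `Fn`, the divisor of a nonzero function, the
Riemann–Roch space `L D ⊆ Fn` of a divisor `D` (`f ∈ L D ↔ div(f) + D ≥ 0`
for `f ≠ 0`), and the Riemann–Roch theorem in the range `deg D > 2g − 2`
(which pins down the genus). -/
structure ProjCurve (K : Type*) [Field K] where
  /-- closed points of the curve -/
  Pt : Type*
  /-- the function field -/
  Fn : Type*
  [fieldFn : Field Fn]
  [algFn : Algebra K Fn]
  /-- the genus -/
  genus : ℕ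
  /-- degree of a closed point (`1` for `K`-rational points) -/
  degPt : Pt → ℕ
  degPt_pos : ∀ p, 0 < degPt p
  /-- the divisor of a (nonzero) function -/
  divisor : Fn → (Pt →₀ ℤ)
  divisor_mul : ∀ f g : Fn, f ≠ 0 → g ≠ 0 → divisor (f * g) = divisor f + divisor g
  /-- the Riemann–Roch space `L(D)` of a divisor -/
  L : (Pt →₀ ℤ) → Submodule K Fn
  mem_L : ∀ (D : Pt →₀ ℤ) (f : Fn), f ≠ 0 → (f ∈ L D ↔ 0 ≤ divisor f + D)
  /-- Riemann–Roch for divisors of degree `> 2g − 2` -/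
  riemann_roch : ∀ D : Pt →₀ ℤ,
    2 * (genus : ℤ) - 2 < D.sum (fun p n => n * degPt p) →
    (Module.finrank K (L D) : ℤ) = D.sum (fun p n => n * degPt p) + 1 - genus

attribute [instance] ProjCurve.fieldFn ProjCurve.algFn

/-- The degree of a divisor. -/
def ProjCurve.degDiv {K : Type*} [Field K] (C : ProjCurve K) (D : C.Pt →₀ ℤ) : ℤ :=
  D.sum fun p n => n * C.degPt p


/-- Setting of Step 2: `D, D'` typical effective degree-3 divisors avoiding the
`K`-rational point `Pinf`, `W^N = L(N·Pinf)`, `s ∈ W^9_{D+D'}` and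
`t ∈ W^10_{D+D'} \ W^9_{D+D'}` an ideal generating set for `D + D'` (their
only common vanishing occurs at `D + D'`), `div(s) = D + D' + D'' − 9·Pinf`
with `D''` effective of degree 3, and `s·W^8 = W^17_{D+D'+D''}`.  Then
`W^7_{D''} = {ℓ ∈ W^7 : t·ℓ ∈ s·W^8}`. -/
theorem stmt17 (K : Type*) [Field K] (C : ProjCurve K)
    (hg : C.genus = 3) (Pinf : C.Pt) (hP : C.degPt Pinf = 1)
    (D D' D'' : C.Pt →₀ ℤ) (hDeff : 0 ≤ D) (hD'eff : 0 ≤ D') (hD''eff : 0 ≤ D'')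
    (hdegD : C.degDiv D = 3) (hdegD' : C.degDiv D' = 3) (hdegD'' : C.degDiv D'' = 3)
    (hsupp : D Pinf = 0) (hsupp' : D' Pinf = 0) (hsupp'' : D'' Pinf = 0)
    -- typicality of D + D'
    (htyp : ∀ N : ℤ, (Module.finrank K (C.L (Finsupp.single Pinf N - D - D')) : ℤ)
      = max 0 (N - 8))
    (s t : C.Fn) (hs0 : s ≠ 0) (ht0 : t ≠ 0)
    (hs : s ∈ C.L (Finsupp.single Pinf 9 - D - D'))
    (ht : t ∈ C.L (Finsupp.single Pinf 10 - D - D'))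
    (ht' : t ∉ C.L (Finsupp.single Pinf 9 - D - D'))
    -- {s, t} is an IGS for D + D': their only common vanishing is at D + D'
    (hIGS : ∀ p : C.Pt, p ≠ Pinf →
      min (C.divisor s p) (C.divisor t p) = (D + D') p)
    -- div(s) = D + D' + D'' − 9·Pinf
    (hdivs : C.divisor s = D + D' + D'' - Finsupp.single Pinf 9)
    -- s·W^8 = W^17_{D+D'+D''}
    (hsW8 : ∀ u : C.Fn, u ∈ C.L (Finsupp.single Pinf 17 - D - D' - D'')
      ↔ ∃ w ∈ C.L (Finsupp.single Pinf 8), u = s * w) :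
    -- conclusion: W^7_{D''} = {ℓ ∈ W^7 : t·ℓ ∈ s·W^8}
    ∀ ℓ : C.Fn, ℓ ∈ C.L (Finsupp.single Pinf 7 - D'')
      ↔ (ℓ ∈ C.L (Finsupp.single Pinf 7)
          ∧ ∃ w ∈ C.L (Finsupp.single Pinf 8), t * ℓ = s * w) := by

  intro ℓ
  constructor
  · intro hℓ
    by_cases hℓ0 : ℓ = 0
    · subst hℓ0
      exact ⟨Submodule.zero_mem _, 0, Submodule.zero_mem _, by simp⟩
    · have hdℓ := (C.mem_L _ _ hℓ0).mp hℓ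
      have hℓ7 : ℓ ∈ C.L (Finsupp.single Pinf 7) := by
        rw [C.mem_L _ _ hℓ0]
        have h : C.divisor ℓ + Finsupp.single Pinf 7
            = (C.divisor ℓ + (Finsupp.single Pinf 7 - D'')) + D'' := by abel
        rw [h]
        exact add_nonneg hdℓ hD''eff
      refine ⟨hℓ7, ?_⟩
      have htℓ0 : t * ℓ ≠ 0 := mul_ne_zero ht0 hℓ0
      have hdt := (C.mem_L _ _ ht0).mp ht
      have htℓ : t * ℓ ∈ C.L (Finsupp.single Pinf 17 - D - D' - D'') := by
        rw [C.mem_L _ _ htℓ0, C.divisor_mul _ _ ht0 hℓ0]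
        have h17 : (Finsupp.single Pinf 17 : C.Pt →₀ ℤ)
            = Finsupp.single Pinf 10 + Finsupp.single Pinf 7 := by
          rw [← Finsupp.single_add]; norm_num
        have h : C.divisor t + C.divisor ℓ + (Finsupp.single Pinf 17 - D - D' - D'')
            = (C.divisor t + (Finsupp.single Pinf 10 - D - D'))
              + (C.divisor ℓ + (Finsupp.single Pinf 7 - D'')) := by
          rw [h17]; abel
        rw [h]
        exact add_nonneg hdt hdℓ
      exact (hsW8 _).mp htℓ
  · rintro ⟨hℓ7, w, hw, heq⟩
    by_cases hℓ0 : ℓ = 0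
    · subst hℓ0; exact Submodule.zero_mem _
    · have htℓ0 : t * ℓ ≠ 0 := mul_ne_zero ht0 hℓ0
      have htℓ : t * ℓ ∈ C.L (Finsupp.single Pinf 17 - D - D' - D'') :=
        (hsW8 _).mpr ⟨w, hw, heq⟩
      have h1 := (C.mem_L _ _ htℓ0).mp htℓ
      rw [C.divisor_mul _ _ ht0 hℓ0] at h1
      have h7 := (C.mem_L _ _ hℓ0).mp hℓ7
      rw [C.mem_L _ _ hℓ0]
      rw [Finsupp.le_def] at h1 h7 hD''eff ⊢
      intro p
      by_cases hp : p = Pinf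
      · have := h7 p
        simp only [hp, Finsupp.coe_zero, Pi.zero_apply, Finsupp.add_apply,
          Finsupp.sub_apply, Finsupp.single_eq_same, hsupp''] at this ⊢
        omega
      · have hg1 := h1 p
        have hg7 := h7 p
        have higs := hIGS p hp
        have h17p : (Finsupp.single Pinf (17:ℤ)) p = 0 :=
          Finsupp.single_eq_of_ne' (Ne.symm hp)
        have h7p : (Finsupp.single Pinf (7:ℤ)) p = 0 :=
          Finsupp.single_eq_of_ne' (Ne.symm hp)
        have hds : C.divisor s p = D p + D' p + D'' p := by
          rw [hdivs]
          simp [Finsupp.single_apply, Ne.symm hp]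
        have heffp := hD''eff p
        simp only [Finsupp.coe_zero, Pi.zero_apply, Finsupp.add_apply,
          Finsupp.sub_apply, h17p, h7p] at hg1 hg7 higs heffp ⊢
        rcases le_total (C.divisor s p) (C.divisor t p) with h | h
        · rw [min_eq_left h] at higs
          omega
        · rw [min_eq_right h] at higs
          omega
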